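/- Let I = I(C_{2n+1}) be the edge ideal of the odd cycle and w = x_1⋯x_{2n+1}, and m = (x_1,...,x_{2n+1}) the maximal homogeneous ideal. Then w·m ⊆ I^{n+1}. -/

import Mathlib

open MvPolynomial
open Fin.NatCast

private lemma prod_mem_pow' {R : Type*} [CommRing R] (I : Ideal R) (f : ℕ → R) :
    ∀ m : ℕ, (∀ k, k < m → f k ∈ I) → ∏ k ∈ Finset.range m, f k ∈ I ^ m := by
  intro m
  induction m with
  | zero => simp
  | succ m ih =>
    intro h
    rw [Finset.prod_range_succ, pow_succ]
    exact Ideal.mul_mem_mul (ih fun k hk => h k (hk.trans (Nat.lt_succ_self m)))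
      (h m (Nat.lt_succ_self m))

private lemma pair_prod {M : Type*} [CommMonoid M] (g : ℕ → M) :
    ∀ m : ℕ, ∏ k ∈ Finset.range m, (g (2 * k) * g (2 * k + 1)) =
      ∏ k ∈ Finset.range (2 * m), g k := by
  intro m
  induction m with
  | zero => simp
  | succ m ih =>
    rw [Finset.prod_range_succ, ih, Nat.mul_succ, Finset.prod_range_succ,
      Finset.prod_range_succ, mul_assoc]

theorem cycleProduct_mul_maximalIdeal_le_pow {K : Type*} [Field K] (n : ℕ) (hn : 1 ≤ n)
    (I : Ideal (MvPolynomial (Fin (2 * n + 1)) K))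
    (hI : I = Ideal.span {f | ∃ i : Fin (2 * n + 1), f = X i * X (i + 1)}) :
    Ideal.span {∏ i, X i} * Ideal.span (Set.range X) ≤ I ^ (n + 1) := by
  rw [Ideal.span_mul_span, Ideal.span_le]
  rintro x hx
  simp only [Set.mem_mul, Set.mem_iUnion, Set.mem_singleton_iff, Set.mem_range] at hx
  obtain ⟨w, hw, s, ⟨j, rfl⟩, rfl⟩ := hx
  subst hw
  -- key identity
  have key : (∏ i, (X i : MvPolynomial (Fin (2 * n + 1)) K)) * X j =
      ∏ k ∈ Finset.range (n + 1),
        (X (j + ((2 * k : ℕ) : Fin (2 * n + 1))) * X (j + ((2 * k : ℕ) : Fin (2 * n + 1)) + 1)) := by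
    have h1 : ∀ k : ℕ, (X (j + ((2 * k : ℕ) : Fin (2 * n + 1))) *
        X (j + ((2 * k : ℕ) : Fin (2 * n + 1)) + 1) : MvPolynomial (Fin (2 * n + 1)) K) =
        (fun m : ℕ => X (j + (m : Fin (2 * n + 1)))) (2 * k) *
        (fun m : ℕ => X (j + (m : Fin (2 * n + 1)))) (2 * k + 1) := by
      intro k
      simp [Nat.cast_add, Nat.cast_one, add_assoc]
    calc (∏ i, (X i : MvPolynomial (Fin (2 * n + 1)) K)) * X j
        = (∏ i : Fin (2 * n + 1), X (j + i)) * X j := by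
          congr 1
          exact (Fintype.prod_equiv (Equiv.addLeft j) (fun i => X (j + i)) X fun i => rfl).symm
      _ = (∏ k ∈ Finset.range (2 * n + 1), X (j + (k : Fin (2 * n + 1)))) * X j := by
          rw [← Fin.prod_univ_eq_prod_range]
          simp
      _ = ∏ k ∈ Finset.range (2 * (n + 1)), X (j + (k : Fin (2 * n + 1))) := by
          conv_rhs => rw [show 2 * (n + 1) = (2 * n + 1) + 1 from by ring,
            Finset.prod_range_succ]
          congr 1
          have : ((2 * n + 1 : ℕ) : Fin (2 * n + 1)) = 0 := by
            simp [Fin.natCast_self]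
          rw [this, add_zero]
      _ = ∏ k ∈ Finset.range (n + 1),
            (X (j + ((2 * k : ℕ) : Fin (2 * n + 1))) *
             X (j + ((2 * k : ℕ) : Fin (2 * n + 1)) + 1)) := by
          rw [← pair_prod (fun m : ℕ => X (j + (m : Fin (2 * n + 1)))) (n + 1)]
          exact Finset.prod_congr rfl fun k _ => (h1 k).symm
  rw [key]
  apply prod_mem_pow'
  intro k _
  rw [hI]
  exact Ideal.subset_span ⟨j + ((2 * k : ℕ) : Fin (2 * n + 1)), rfl⟩
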